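/- Let q > 5 and Δv > 0. There exists a constant C_M > 0, depending only on q, with the following property. Let f : ℤ³ → [0,∞) satisfy 0 < N := sup_{j∈ℤ³} f_j(1+|v_j|)^q < ∞, where v_j = jΔv ∈ ℝ³, and let ρ = Σ_j f_j Δv³ > 0, U = (1/ρ)Σ_j f_j v_j Δv³, T = (1/(3ρ))Σ_j f_j|v_j − U|² Δv³. If Δv ≤ ((π/(q−5))·N/ρ)^{1/(q−3)}, then ρ·(T + |U|²)^{(q−3)/2} ≤ C_M · N. -/

import Mathlib

noncomputable section

open Real MeasureTheory

/-- Velocity space `ℝ³`. -/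
abbrev V3 := Fin 3 → ℝ

/-- Velocity grid index set `ℤ³`. -/
abbrev Idx3 := Fin 3 → ℤ

/-- Euclidean norm on `V3`. -/
def enorm3 (v : V3) : ℝ := Real.sqrt (∑ a, v a ^ 2)

/-- The velocity grid node `v_j = jΔv`. -/
def gridV (Δv : ℝ) (j : Idx3) : V3 := fun a => (j a : ℝ) * Δv

/-- Quadratic form `kᵀ A k` of a 3×3 matrix. -/
def quadForm (A : Matrix (Fin 3) (Fin 3) ℝ) (k : V3) : ℝ := ∑ a, ∑ b, k a * A a b * k b

/-- The ellipsoidal Gaussian with density `ρ`, bulk velocity `U` and temperature tensor `T`. -/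
def gaussianM (ρ : ℝ) (U : V3) (T : Matrix (Fin 3) (Fin 3) ℝ) (v : V3) : ℝ :=
  ρ / Real.sqrt ((2 * π) ^ 3 * T.det) *
    Real.exp (-(1 / 2) * quadForm T⁻¹ (fun a => v a - U a))

/-- Discrete density. -/
def dRho (Δv : ℝ) (h : Idx3 → ℝ) : ℝ := ∑' j : Idx3, h j * Δv ^ 3

/-- Discrete bulk velocity. -/
def dU (Δv : ℝ) (h : Idx3 → ℝ) : V3 :=
  fun a => (dRho Δv h)⁻¹ * ∑' j : Idx3, h j * gridV Δv j a * Δv ^ 3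

/-- Discrete temperature. -/
def dT (Δv : ℝ) (h : Idx3 → ℝ) : ℝ :=
  (3 * dRho Δv h)⁻¹ * ∑' j : Idx3, h j * enorm3 (fun a => gridV Δv j a - dU Δv h a) ^ 2 * Δv ^ 3

/-- Discrete stress tensor. -/
def dTheta (Δv : ℝ) (h : Idx3 → ℝ) : Matrix (Fin 3) (Fin 3) ℝ :=
  Matrix.of fun a b =>
    (dRho Δv h)⁻¹ *
      ∑' j : Idx3, h j * (gridV Δv j a - dU Δv h a) * (gridV Δv j b - dU Δv h b) * Δv ^ 3

/-- The temperature tensor `(1−ν)T·Id + νΘ`. -/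
def tensorOf (ν T : ℝ) (Θ : Matrix (Fin 3) (Fin 3) ℝ) : Matrix (Fin 3) (Fin 3) ℝ :=
  ((1 - ν) * T) • (1 : Matrix (Fin 3) (Fin 3) ℝ) + ν • Θ

/-- Continuous density. -/
def cRho (F : V3 → ℝ) : ℝ := ∫ v : V3, F v

/-- Continuous bulk velocity. -/
def cU (F : V3 → ℝ) : V3 := fun a => (cRho F)⁻¹ * ∫ v : V3, F v * v a

/-- Continuous temperature. -/
def cT (F : V3 → ℝ) : ℝ :=
  (3 * cRho F)⁻¹ * ∫ v : V3, F v * enorm3 (fun a => v a - cU F a) ^ 2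

/-- Continuous stress tensor. -/
def cTheta (F : V3 → ℝ) : Matrix (Fin 3) (Fin 3) ℝ :=
  Matrix.of fun a b => (cRho F)⁻¹ * ∫ v : V3, F v * (v a - cU F a) * (v b - cU F b)

/-- Collision frequency `A_ν = (1−ν)⁻¹`. -/
def Anu (ν : ℝ) : ℝ := (1 - ν)⁻¹

/-- The modified relaxation parameter `nt = κν/(κ+Δt)`. -/
def nuTilde (κ ν Δt : ℝ) : ℝ := κ * ν / (κ + Δt)

/-- `s(i,j)`: the unique integer with `sΔx ≤ iΔx − Δt v_{j,1} < (s+1)Δx`. -/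
def sIdx (Δx Δt Δv : ℝ) (i : ℤ) (j : Idx3) : ℤ :=
  ⌊((i : ℝ) * Δx - Δt * ((j 0 : ℝ) * Δv)) / Δx⌋

/-- Linear reconstruction of a grid function at the foot of the characteristic. -/
def recon (Δx Δt Δv : ℝ) (g : ℤ → Idx3 → ℝ) (i : ℤ) (j : Idx3) : ℝ :=
  (((i : ℝ) * Δx - Δt * ((j 0 : ℝ) * Δv) - (sIdx Δx Δt Δv i j : ℝ) * Δx) / Δx) *
      g (sIdx Δx Δt Δv i j + 1) j
    + ((((sIdx Δx Δt Δv i j : ℝ) + 1) * Δx - ((i : ℝ) * Δx - Δt * ((j 0 : ℝ) * Δv))) / Δx) *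
      g (sIdx Δx Δt Δv i j) j

/-- Discrete ellipsoidal Gaussian built from a velocity grid function `h`. -/
def gaussD (nt Δv : ℝ) (h : Idx3 → ℝ) (j : Idx3) : ℝ :=
  gaussianM (dRho Δv h) (dU Δv h) (tensorOf nt (dT Δv h) (dTheta Δv h)) (gridV Δv j)

/-- The shifted initial datum `v ↦ f₀(x_i − Δt v₁, v)`. -/
def shift0 (f₀ : ℝ → V3 → ℝ) (Δx Δt : ℝ) (i : ℤ) : V3 → ℝ :=
  fun v => f₀ ((i : ℝ) * Δx - Δt * v 0) v

/-- Step-0 ellipsoidal Gaussian, built from the continuous macroscopic fields of `f̃⁰`. -/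
def gauss0 (f₀ : ℝ → V3 → ℝ) (κ ν Δx Δt Δv : ℝ) (i : ℤ) (j : Idx3) : ℝ :=
  gaussianM (cRho (shift0 f₀ Δx Δt i)) (cU (shift0 f₀ Δx Δt i))
    (tensorOf (nuTilde κ ν Δt) (cT (shift0 f₀ Δx Δt i)) (cTheta (shift0 f₀ Δx Δt i)))
    (gridV Δv j)

/-- `f̃⁰_{i,j} = f₀(x_i − Δt v_{j,1}, v_j)`. -/
def tilde0 (f₀ : ℝ → V3 → ℝ) (Δx Δt Δv : ℝ) (i : ℤ) (j : Idx3) : ℝ :=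
  f₀ ((i : ℝ) * Δx - Δt * ((j 0 : ℝ) * Δv)) (gridV Δv j)

/-- The semi-Lagrangian scheme iterates `fⁿ_{i,j}`. -/
def schemeF (f₀ : ℝ → V3 → ℝ) (κ ν Δx Δt Δv : ℝ) : ℕ → ℤ → Idx3 → ℝ
  | 0 => fun i j => f₀ ((i : ℝ) * Δx) (gridV Δv j)
  | 1 => fun i j =>
      (κ / (κ + Anu ν * Δt)) * tilde0 f₀ Δx Δt Δv i j
        + (Anu ν * Δt / (κ + Anu ν * Δt)) * gauss0 f₀ κ ν Δx Δt Δv i j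
  | (n + 2) => fun i j =>
      (κ / (κ + Anu ν * Δt)) * recon Δx Δt Δv (schemeF f₀ κ ν Δx Δt Δv (n + 1)) i j
        + (Anu ν * Δt / (κ + Anu ν * Δt)) *
            gaussD (nuTilde κ ν Δt) Δv (recon Δx Δt Δv (schemeF f₀ κ ν Δx Δt Δv (n + 1)) i) j

/-- The reconstructed scheme iterates `f̃ⁿ_{i,j}`. -/
def schemeTilde (f₀ : ℝ → V3 → ℝ) (κ ν Δx Δt Δv : ℝ) : ℕ → ℤ → Idx3 → ℝ
  | 0 => tilde0 f₀ Δx Δt Δv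
  | (n + 1) => recon Δx Δt Δv (schemeF f₀ κ ν Δx Δt Δv (n + 1))

/-- The ellipsoidal Gaussian used in the `n → n+1` update of the scheme. -/
def schemeGauss (f₀ : ℝ → V3 → ℝ) (κ ν Δx Δt Δv : ℝ) : ℕ → ℤ → Idx3 → ℝ
  | 0 => gauss0 f₀ κ ν Δx Δt Δv
  | (n + 1) => fun i j =>
      gaussD (nuTilde κ ν Δt) Δv (schemeTilde f₀ κ ν Δx Δt Δv (n + 1) i) j

/-- Discrete density of `f̃ⁿ` at spatial node `i` (continuous fields at step 0). -/
def schemeRho (f₀ : ℝ → V3 → ℝ) (κ ν Δx Δt Δv : ℝ) : ℕ → ℤ → ℝ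
  | 0 => fun i => cRho (shift0 f₀ Δx Δt i)
  | (n + 1) => fun i => dRho Δv (schemeTilde f₀ κ ν Δx Δt Δv (n + 1) i)

/-- Discrete bulk velocity of `f̃ⁿ` at spatial node `i` (continuous fields at step 0). -/
def schemeU (f₀ : ℝ → V3 → ℝ) (κ ν Δx Δt Δv : ℝ) : ℕ → ℤ → V3
  | 0 => fun i => cU (shift0 f₀ Δx Δt i)
  | (n + 1) => fun i => dU Δv (schemeTilde f₀ κ ν Δx Δt Δv (n + 1) i)

/-- Discrete temperature of `f̃ⁿ` at spatial node `i` (continuous fields at step 0). -/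
def schemeTemp (f₀ : ℝ → V3 → ℝ) (κ ν Δx Δt Δv : ℝ) : ℕ → ℤ → ℝ
  | 0 => fun i => cT (shift0 f₀ Δx Δt i)
  | (n + 1) => fun i => dT Δv (schemeTilde f₀ κ ν Δx Δt Δv (n + 1) i)

/-- Weighted `L∞_q` norm of the initial datum. -/
def normLq (q : ℝ) (f₀ : ℝ → V3 → ℝ) : ℝ :=
  ⨆ x : ℝ, ⨆ v : V3, |f₀ x v| * (1 + enorm3 v) ^ q

open Finset in
/-- Bernoulli-type inequality for nonpositive exponents. -/
lemma bern_neg {y p : ℝ} (hy0 : 0 < y) (hy1 : y ≤ 1/2) (hp : p < 0) :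
    1 + (-p) * y ≤ (1 - y) ^ p := by
  have h1y : (0:ℝ) < 1 - y := by linarith
  rcases le_or_gt (-p) 1 with hple | hpgt
  · have h2 : (1 - y) ^ (-p) ≤ 1 + (-p) * (-y) := by
      have := rpow_one_add_le_one_add_mul_self (s := -y) (p := -p)
        (by linarith) (by linarith) hple
      simpa [← sub_eq_add_neg] using this
    have hpos : (0:ℝ) < 1 + p * y := by nlinarith
    have h3 : (1 - y) ^ p = ((1 - y) ^ (-p))⁻¹ := by
      rw [← Real.rpow_neg h1y.le, neg_neg]
    have h4 : ((1:ℝ) + p * y)⁻¹ ≤ ((1 - y) ^ (-p))⁻¹ := by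
      apply inv_anti₀ (Real.rpow_pos_of_pos h1y _)
      nlinarith [h2]
    have h5 : 1 + (-p) * y ≤ (1 + p * y)⁻¹ := by
      have hmul : (1 + (-p) * y) * (1 + p * y) ≤ 1 := by nlinarith [sq_nonneg (p*y)]
      have hL : (0:ℝ) < 1 + (-p) * y := by nlinarith [mul_pos (neg_pos.2 hp) hy0]
      calc 1 + (-p) * y = (1 + (-p) * y) * (1 + p * y) * (1 + p * y)⁻¹ := by
            field_simp
        _ ≤ 1 * (1 + p * y)⁻¹ := by
            apply mul_le_mul_of_nonneg_right hmul (by positivity)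
        _ = (1 + p * y)⁻¹ := one_mul _
    rw [h3]; exact h5.trans h4
  · have hs : (0:ℝ) ≤ y / (1 - y) := by positivity
    have h2 : 1 + (-p) * (y / (1 - y)) ≤ (1 + y / (1 - y)) ^ (-p) :=
      one_add_mul_self_le_rpow_one_add (by linarith) hpgt.le
    have h3 : 1 + y / (1 - y) = (1 - y)⁻¹ := by field_simp; ring
    have h4 : ((1 - y)⁻¹) ^ (-p) = (1 - y) ^ p := by
      rw [Real.inv_rpow h1y.le, ← Real.rpow_neg h1y.le, neg_neg]
    have h5 : y ≤ y / (1 - y) := by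
      rw [le_div_iff₀ h1y]; nlinarith
    have h6 : 1 + (-p) * y ≤ 1 + (-p) * (y / (1 - y)) := by nlinarith
    calc 1 + (-p) * y ≤ 1 + (-p) * (y / (1 - y)) := h6
      _ ≤ (1 + y / (1 - y)) ^ (-p) := h2
      _ = (1 - y) ^ p := by rw [h3, h4]

/-- Telescoping step: `(-p) n^(p-1) ≤ (n-1)^p - n^p` for `n ≥ 2`, `p < 0`. -/
lemma telescope_step {p : ℝ} (hp : p < 0) {n : ℕ} (hn : 2 ≤ n) :
    (-p) * (n:ℝ) ^ (p - 1) ≤ ((n:ℝ) - 1) ^ p - (n:ℝ) ^ p := by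
  have hn0 : (0:ℝ) < n := by positivity
  have hy0 : (0:ℝ) < 1 / n := by positivity
  have hy1 : (1:ℝ) / n ≤ 1 / 2 := by
    apply div_le_div_of_nonneg_left one_pos.le two_pos
    exact_mod_cast hn
  have key := bern_neg hy0 hy1 hp
  -- multiply by n^p
  have hnp : (0:ℝ) < (n:ℝ) ^ p := Real.rpow_pos_of_pos hn0 _
  have hprod : ((1:ℝ) - 1 / n) ^ p * (n:ℝ) ^ p = ((n:ℝ) - 1) ^ p := by
    rw [← Real.mul_rpow (by linarith : (0:ℝ) ≤ 1 - 1/n) hn0.le]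
    congr 1
    field_simp
  have h2 : (1 + (-p) * (1 / n)) * (n:ℝ) ^ p ≤ ((n:ℝ) - 1) ^ p := by
    rw [← hprod]
    exact mul_le_mul_of_nonneg_right key hnp.le
  have h3 : (1 + (-p) * (1 / n)) * (n:ℝ) ^ p = (n:ℝ) ^ p + (-p) * (n:ℝ) ^ (p - 1) := by
    rw [Real.rpow_sub hn0, Real.rpow_one]
    field_simp
  linarith [h3 ▸ h2]

/-- Tail sum bound: finite sums of `n^(p-1)` over `n > L` are `≤ (1+1/(-p)) L^p`. -/
lemma nat_tail {p L : ℝ} (hp : p < 0) (hL : 0 < L) (u : Finset ℕ)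
    (hu : ∀ n ∈ u, L < n) :
    ∑ n ∈ u, (n:ℝ) ^ (p - 1) ≤ (1 + 1/(-p)) * L ^ p := by
  have hRpos : (0:ℝ) < (1 + 1/(-p)) * L ^ p := by
    have := Real.rpow_pos_of_pos hL p
    have hnp : (0:ℝ) < -p := by linarith
    have h1 : (0:ℝ) < 1/(-p) := by positivity
    nlinarith
  rcases u.eq_empty_or_nonempty with rfl | hne
  · simpa using hRpos.le
  set n₁ : ℕ := Nat.floor L + 1 with hn₁def
  have hLn₁ : L < n₁ := by
    have := Nat.lt_floor_add_one L
    push_cast [hn₁def]; exact_mod_cast this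
  have hn₁1 : 1 ≤ n₁ := Nat.le_add_left 1 _
  have hmem : ∀ n ∈ u, n₁ ≤ n := by
    intro n hn
    have := hu n hn
    have : Nat.floor L < n := by
      rw [Nat.floor_lt hL.le]; exact this
    omega
  set M : ℕ := u.max' hne with hMdef
  have hMu : M ∈ u := u.max'_mem hne
  have hn₁M : n₁ ≤ M := hmem M hMu
  -- telescoping bound on Icc (n₁+1) M
  have claim : ∀ m : ℕ, n₁ ≤ m →
      ∑ n ∈ Finset.Icc (n₁+1) m, (n:ℝ) ^ (p - 1) ≤ ((n₁:ℝ) ^ p - (m:ℝ) ^ p) / (-p) := by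
    intro m hm
    induction m, hm using Nat.le_induction with
    | base => simp
    | succ m hm ih =>
        rw [Finset.sum_Icc_succ_top (by omega)]
        have hts : (-p) * ((m+1:ℕ):ℝ) ^ (p - 1) ≤ (((m+1:ℕ):ℝ) - 1) ^ p - ((m+1:ℕ):ℝ) ^ p :=
          telescope_step hp (by omega)
        have hm1 : (((m+1:ℕ):ℝ) - 1) = (m:ℝ) := by push_cast; ring
        rw [hm1] at hts
        have hnegp : (0:ℝ) < -p := by linarith
        have h2 : ((m+1:ℕ):ℝ) ^ (p - 1) ≤ ((m:ℝ) ^ p - ((m+1:ℕ):ℝ) ^ p) / (-p) := by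
          rw [le_div_iff₀ hnegp]; nlinarith [hts]
        calc ∑ n ∈ Finset.Icc (n₁+1) m, (n:ℝ) ^ (p - 1) + ((m+1:ℕ):ℝ) ^ (p-1)
            ≤ ((n₁:ℝ) ^ p - (m:ℝ) ^ p) / (-p) + ((m:ℝ) ^ p - ((m+1:ℕ):ℝ) ^ p) / (-p) :=
              add_le_add ih h2
          _ = ((n₁:ℝ) ^ p - ((m+1:ℕ):ℝ) ^ p) / (-p) := by ring
  -- assemble
  have hsub : u ⊆ Finset.Icc n₁ M := by
    intro n hn
    exact Finset.mem_Icc.2 ⟨hmem n hn, u.le_max' n hn⟩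
  have h1 : ∑ n ∈ u, (n:ℝ) ^ (p - 1) ≤ ∑ n ∈ Finset.Icc n₁ M, (n:ℝ) ^ (p - 1) := by
    apply Finset.sum_le_sum_of_subset_of_nonneg hsub
    intro n hn _
    rcases Nat.eq_zero_or_pos n with rfl | hn0
    · simp [Real.zero_rpow (by linarith : p - 1 ≠ 0)]
    · positivity
  have hsplit : Finset.Icc n₁ M = (Finset.Icc (n₁+1) M).cons n₁
      (by simp [Finset.mem_Icc]) := by
    ext x
    simp only [Finset.mem_Icc, Finset.mem_cons]
    omega
  have hn₁R : (1:ℝ) ≤ (n₁:ℝ) := by exact_mod_cast hn₁1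
  have hn₁p : (n₁:ℝ) ^ (p - 1) ≤ L ^ p := by
    calc (n₁:ℝ) ^ (p - 1) ≤ (n₁:ℝ) ^ p := Real.rpow_le_rpow_of_exponent_le hn₁R (by linarith)
      _ ≤ L ^ p := Real.rpow_le_rpow_of_nonpos hL hLn₁.le hp.le
  have hMp : (0:ℝ) ≤ (M:ℝ) ^ p := Real.rpow_nonneg (by positivity) _
  have h2 : ∑ n ∈ Finset.Icc (n₁+1) M, (n:ℝ) ^ (p - 1) ≤ L ^ p / (-p) := by
    calc ∑ n ∈ Finset.Icc (n₁+1) M, (n:ℝ) ^ (p - 1)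
        ≤ ((n₁:ℝ) ^ p - (M:ℝ) ^ p) / (-p) := claim M hn₁M
      _ ≤ (n₁:ℝ) ^ p / (-p) := by
          apply div_le_div_of_nonneg_right ?_ (by linarith) |>.trans_eq rfl
          · linarith
      _ ≤ L ^ p / (-p) := by
          apply div_le_div_of_nonneg_right ?_ (by linarith) |>.trans_eq rfl
          exact Real.rpow_le_rpow_of_nonpos hL hLn₁.le hp.le
  calc ∑ n ∈ u, (n:ℝ) ^ (p - 1) ≤ ∑ n ∈ Finset.Icc n₁ M, (n:ℝ) ^ (p - 1) := h1
    _ = (n₁:ℝ) ^ (p-1) + ∑ n ∈ Finset.Icc (n₁+1) M, (n:ℝ) ^ (p - 1) := by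
        rw [hsplit, Finset.sum_cons]
    _ ≤ L ^ p + L ^ p / (-p) := add_le_add hn₁p h2
    _ = (1 + 1/(-p)) * L ^ p := by
        have hnp : (0:ℝ) < -p := by linarith
        have hp0 : p ≠ 0 := by linarith
        field_simp


open Finset in
/-- sup norm index. -/
def mIdx (j : Idx3) : ℕ := Finset.univ.sup fun a => (j a).natAbs

open Finset in
lemma enorm3_nonneg (v : V3) : 0 ≤ enorm3 v := Real.sqrt_nonneg _

open Finset in
lemma sq_enorm3 (v : V3) : enorm3 v ^ 2 = ∑ a, v a ^ 2 :=
  Real.sq_sqrt (by positivity)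

open Finset in
lemma coord_le_enorm3 (v : V3) (a : Fin 3) : |v a| ≤ enorm3 v := by
  have h1 : v a ^ 2 ≤ ∑ b, v b ^ 2 :=
    Finset.single_le_sum (fun b _ => sq_nonneg (v b)) (Finset.mem_univ a)
  calc |v a| = Real.sqrt (v a ^ 2) := (Real.sqrt_sq_eq_abs _).symm
    _ ≤ enorm3 v := Real.sqrt_le_sqrt h1

open Finset in
lemma enorm3_le_sqrt3_mul {v : V3} {M : ℝ} (h : ∀ a, |v a| ≤ M) :
    enorm3 v ≤ Real.sqrt 3 * M := by
  have hM : 0 ≤ M := (abs_nonneg _).trans (h 0)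
  have h1 : ∑ a, v a ^ 2 ≤ 3 * M ^ 2 := by
    have : ∀ a : Fin 3, v a ^ 2 ≤ M ^ 2 := fun a => by
      rw [← sq_abs]; exact pow_le_pow_left₀ (abs_nonneg _) (h a) 2
    calc ∑ a, v a ^ 2 ≤ ∑ _a : Fin 3, M ^ 2 :=
          Finset.sum_le_sum fun a _ => this a
      _ = 3 * M ^ 2 := by simp [Finset.sum_const]
  calc enorm3 v ≤ Real.sqrt (3 * M ^ 2) := Real.sqrt_le_sqrt h1
    _ = Real.sqrt 3 * M := by
        rw [Real.sqrt_mul (by norm_num), Real.sqrt_sq hM]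

open Finset in
lemma gridV_coord_abs {Δv : ℝ} (hΔv : 0 ≤ Δv) (j : Idx3) (a : Fin 3) :
    |gridV Δv j a| = ((j a).natAbs : ℝ) * Δv := by
  rw [gridV, abs_mul, abs_of_nonneg hΔv, Nat.cast_natAbs]
  norm_num

open Finset in
lemma mIdx_mul_le_enorm3 {Δv : ℝ} (hΔv : 0 ≤ Δv) (j : Idx3) :
    (mIdx j : ℝ) * Δv ≤ enorm3 (gridV Δv j) := by
  obtain ⟨a, -, ha⟩ := Finset.exists_mem_eq_sup Finset.univ Finset.univ_nonempty
    (fun a => (j a).natAbs)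
  rw [mIdx, ha, ← gridV_coord_abs hΔv]
  exact coord_le_enorm3 _ a

open Finset in
lemma enorm3_le_mIdx_mul {Δv : ℝ} (hΔv : 0 ≤ Δv) (j : Idx3) :
    enorm3 (gridV Δv j) ≤ Real.sqrt 3 * ((mIdx j : ℝ) * Δv) := by
  apply enorm3_le_sqrt3_mul
  intro a
  rw [gridV_coord_abs hΔv]
  have h2 : (j a).natAbs ≤ mIdx j :=
    Finset.le_sup (f := fun a => (j a).natAbs) (Finset.mem_univ a)
  have : ((j a).natAbs : ℝ) ≤ (mIdx j : ℝ) := by exact_mod_cast h2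
  exact mul_le_mul_of_nonneg_right this hΔv

open Finset in
lemma shell_card {n : ℕ} (hn : 1 ≤ n) (t : Finset Idx3) (ht : ∀ j ∈ t, mIdx j = n) :
    t.card ≤ 26 * n ^ 2 := by
  classical
  set box : ℕ → Finset Idx3 := fun m => Fintype.piFinset fun _ : Fin 3 =>
    Finset.Icc (-(m:ℤ)) (m:ℤ) with hbox
  have hboxcard : ∀ m : ℕ, (box m).card = (2*m+1)^3 := by
    intro m
    rw [hbox]
    rw [Fintype.card_piFinset]
    simp [Int.card_Icc]
    omega
  have hmem : ∀ (m : ℕ) (j : Idx3), j ∈ box m ↔ ∀ a, (j a).natAbs ≤ m := by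
    intro m j
    rw [hbox]
    simp only [Fintype.mem_piFinset, Finset.mem_Icc]
    constructor <;> intro h a <;> have := h a <;> omega
  have hsubbox : box (n-1) ⊆ box n := by
    intro j hj
    rw [hmem] at hj ⊢
    intro a; have := hj a; omega
  have hsub : t ⊆ box n \ box (n-1) := by
    intro j hj
    have hmj := ht j hj
    rw [Finset.mem_sdiff, hmem, hmem]
    constructor
    · intro a
      rw [← hmj]
      exact Finset.le_sup (f := fun a => (j a).natAbs) (Finset.mem_univ a)
    · intro hcon
      have : mIdx j ≤ n - 1 := Finset.sup_le fun a _ => hcon a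
      omega
  calc t.card ≤ (box n \ box (n-1)).card := Finset.card_le_card hsub
    _ = (2*n+1)^3 - (2*(n-1)+1)^3 := by
        rw [Finset.card_sdiff_of_subset hsubbox, hboxcard, hboxcard]
    _ ≤ 26 * n ^ 2 := by
        obtain ⟨m, rfl⟩ : ∃ m, n = m + 1 := ⟨n - 1, by omega⟩
        have h1 : (2*(m+1)+1)^3 ≤ (2*(m+1-1)+1)^3 + 26*(m+1)^2 := by
          simp only [Nat.add_sub_cancel]
          ring_nf
          nlinarith [sq_nonneg m, m.zero_le]
        omega

open Finset in
lemma tail_sum {q : ℝ} (hq : 5 < q) {Δv R : ℝ} (hΔv : 0 < Δv) (hR : Δv ≤ R)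
    (t : Finset Idx3) :
    ∑ j ∈ t, (if R < enorm3 (gridV Δv j)
        then (1 + enorm3 (gridV Δv j)) ^ (2 - q) * Δv ^ 3 else 0)
      ≤ (26 * (1 + 1/(q-5)) * Real.sqrt 3 ^ (q-5)) * R ^ (5-q) := by
  classical
  have hRpos : 0 < R := hΔv.trans_le hR
  have hs3 : (0:ℝ) < Real.sqrt 3 := by positivity
  set L : ℝ := R / (Real.sqrt 3 * Δv) with hLdef
  have hL : 0 < L := by positivity
  set t' := t.filter (fun j => R < enorm3 (gridV Δv j)) with ht'
  have hLHS : ∑ j ∈ t, (if R < enorm3 (gridV Δv j)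
      then (1 + enorm3 (gridV Δv j)) ^ (2 - q) * Δv ^ 3 else 0)
      = ∑ j ∈ t', (1 + enorm3 (gridV Δv j)) ^ (2 - q) * Δv ^ 3 := by
    rw [ht', Finset.sum_filter]
  -- facts about members of t'
  have hmemL : ∀ j ∈ t', L < (mIdx j : ℝ) := by
    intro j hj
    have hRj : R < enorm3 (gridV Δv j) := (Finset.mem_filter.1 hj).2
    have h2 := enorm3_le_mIdx_mul hΔv.le j
    rw [hLdef, div_lt_iff₀ (by positivity)]
    nlinarith
  have hterm : ∀ j ∈ t', (1 + enorm3 (gridV Δv j)) ^ (2 - q) * Δv ^ 3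
      ≤ ((mIdx j : ℝ) * Δv) ^ (2 - q) * Δv ^ 3 := by
    intro j hj
    have h0 : 0 < (mIdx j : ℝ) * Δv := by
      have := hmemL j hj
      have : 0 < (mIdx j : ℝ) := hL.trans this
      positivity
    have h1 : (mIdx j : ℝ) * Δv ≤ 1 + enorm3 (gridV Δv j) := by
      have := mIdx_mul_le_enorm3 hΔv.le j
      linarith
    have := Real.rpow_le_rpow_of_nonpos h0 h1 (by linarith : 2 - q ≤ 0)
    exact mul_le_mul_of_nonneg_right this (by positivity)
  -- group by the sup-norm
  have hψnonneg : ∀ n : ℕ, 0 ≤ ((n:ℝ) * Δv) ^ (2 - q) * Δv ^ 3 := by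
    intro n
    apply mul_nonneg (Real.rpow_nonneg (by positivity) _) (by positivity)
  have hgroup : ∑ j ∈ t', ((mIdx j : ℝ) * Δv) ^ (2 - q) * Δv ^ 3
      = ∑ n ∈ t'.image mIdx, (t'.filter fun j => mIdx j = n).card
          • (((n:ℝ) * Δv) ^ (2 - q) * Δv ^ 3) :=
    Finset.sum_comp (fun n : ℕ => ((n:ℝ) * Δv) ^ (2 - q) * Δv ^ 3) mIdx
  have himageL : ∀ n ∈ t'.image mIdx, L < (n:ℝ) := by
    intro n hn
    obtain ⟨j, hj, rfl⟩ := Finset.mem_image.1 hn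
    exact hmemL j hj
  have hcard : ∀ n ∈ t'.image mIdx,
      ((t'.filter fun j => mIdx j = n).card : ℝ) ≤ 26 * (n:ℝ) ^ 2 := by
    intro n hn
    have hn1 : 1 ≤ n := by
      have := himageL n hn
      by_contra hcon
      push_neg at hcon
      interval_cases n
      · simp at this; linarith
    have := shell_card hn1 (t'.filter fun j => mIdx j = n)
      (fun j hj => (Finset.mem_filter.1 hj).2)
    exact_mod_cast this
  -- bound each group
  have hbound : ∀ n ∈ t'.image mIdx,
      (t'.filter fun j => mIdx j = n).card • (((n:ℝ) * Δv) ^ (2 - q) * Δv ^ 3)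
      ≤ 26 * Δv ^ (5 - q) * (n:ℝ) ^ ((5 - q) - 1) := by
    intro n hn
    have hnpos : (0:ℝ) < n := hL.trans (himageL n hn)
    rw [nsmul_eq_mul]
    have h1 : ((t'.filter fun j => mIdx j = n).card : ℝ)
        * (((n:ℝ) * Δv) ^ (2 - q) * Δv ^ 3)
        ≤ (26 * (n:ℝ) ^ 2) * (((n:ℝ) * Δv) ^ (2 - q) * Δv ^ 3) :=
      mul_le_mul_of_nonneg_right (hcard n hn) (hψnonneg n)
    refine h1.trans_eq ?_
    rw [Real.mul_rpow hnpos.le hΔv.le]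
    rw [show (5 - q) - 1 = 2 + (2 - q) by ring]
    rw [Real.rpow_add hnpos, show ((5:ℝ) - q) = (2 - q) + 3 by ring,
      Real.rpow_add hΔv]
    rw [show ((n:ℝ) ^ (2:ℝ)) = (n:ℝ) ^ (2:ℕ) by rw [← Real.rpow_natCast]; norm_num,
      show ((Δv:ℝ) ^ (3:ℝ)) = Δv ^ (3:ℕ) by rw [← Real.rpow_natCast]; norm_num]
    ring
  -- sum up using nat_tail
  have htail := nat_tail (by linarith : 5 - q < 0) hL (t'.image mIdx) himageL
  have hΔL : Δv ^ (5-q) * L ^ (5-q) = Real.sqrt 3 ^ (q-5) * R ^ (5-q) := by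
    rw [← Real.mul_rpow hΔv.le hL.le]
    have h1 : Δv * L = R / Real.sqrt 3 := by
      rw [hLdef]; field_simp
    rw [h1, Real.div_rpow hRpos.le hs3.le]
    rw [show (q:ℝ) - 5 = -(5-q) by ring, Real.rpow_neg hs3.le]
    field_simp
  calc ∑ j ∈ t, (if R < enorm3 (gridV Δv j)
        then (1 + enorm3 (gridV Δv j)) ^ (2 - q) * Δv ^ 3 else 0)
      = ∑ j ∈ t', (1 + enorm3 (gridV Δv j)) ^ (2 - q) * Δv ^ 3 := hLHS
    _ ≤ ∑ j ∈ t', ((mIdx j : ℝ) * Δv) ^ (2 - q) * Δv ^ 3 := Finset.sum_le_sum hterm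
    _ = ∑ n ∈ t'.image mIdx, (t'.filter fun j => mIdx j = n).card
          • (((n:ℝ) * Δv) ^ (2 - q) * Δv ^ 3) := hgroup
    _ ≤ ∑ n ∈ t'.image mIdx, 26 * Δv ^ (5 - q) * (n:ℝ) ^ ((5 - q) - 1) :=
        Finset.sum_le_sum hbound
    _ = 26 * Δv ^ (5 - q) * ∑ n ∈ t'.image mIdx, (n:ℝ) ^ ((5 - q) - 1) := by
        rw [Finset.mul_sum]
    _ ≤ 26 * Δv ^ (5 - q) * ((1 + 1/(-(5-q))) * L ^ (5-q)) := by
        apply mul_le_mul_of_nonneg_left htail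
        positivity
    _ = (26 * (1 + 1/(q-5)) * Real.sqrt 3 ^ (q-5)) * R ^ (5-q) := by
        rw [show (-(5-q) : ℝ) = q - 5 by ring]
        calc 26 * Δv ^ (5 - q) * ((1 + 1/(q-5)) * L ^ (5-q))
            = 26 * (1 + 1/(q-5)) * (Δv ^ (5-q) * L ^ (5-q)) := by ring
          _ = _ := by rw [hΔL]; ring


set_option maxHeartbeats 1000000 in
/-- discrete moment estimate `ρ(T+|U|²)^{(q−3)/2} ≤ C_M N`. -/
theorem discrete_moment_estimate_two (q : ℝ) (hq : 5 < q) :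
    ∃ C > 0, ∀ (Δv : ℝ), 0 < Δv → ∀ f : Idx3 → ℝ, (∀ j, 0 ≤ f j) →
      BddAbove (Set.range fun j : Idx3 => f j * (1 + enorm3 (gridV Δv j)) ^ q) →
      0 < (⨆ j : Idx3, f j * (1 + enorm3 (gridV Δv j)) ^ q) →
      0 < dRho Δv f →
      Δv ≤ ((π / (q - 5)) * (⨆ j : Idx3, f j * (1 + enorm3 (gridV Δv j)) ^ q) / dRho Δv f)
            ^ (1 / (q - 3)) →
      dRho Δv f * (dT Δv f + enorm3 (dU Δv f) ^ 2) ^ ((q - 3) / 2)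
        ≤ C * ⨆ j : Idx3, f j * (1 + enorm3 (gridV Δv j)) ^ q := by
  have hq5 : (0:ℝ) < q - 5 := by linarith
  have hq3 : (0:ℝ) < q - 3 := by linarith
  have hπ : (0:ℝ) < π := Real.pi_pos
  set C₁ : ℝ := 26 * (1 + 1/(q-5)) * Real.sqrt 3 ^ (q-5) with hC₁def
  have hC₁pos : 0 < C₁ := by
    have h3 : (0:ℝ) < Real.sqrt 3 := by positivity
    have := Real.rpow_pos_of_pos h3 (q-5)
    have h1 : (0:ℝ) < 1 + 1/(q-5) := by positivity
    positivity
  set c₃ : ℝ := 1 + C₁ * (q-5) / π with hc₃def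
  have hc₃pos : 0 < c₃ := by positivity
  refine ⟨π/(q-5) * ((7/3) * c₃) ^ ((q-3)/2), by positivity, ?_⟩
  intro Δv hΔv f hf hBdd hN hρ hΔvK
  set N : ℝ := ⨆ j : Idx3, f j * (1 + enorm3 (gridV Δv j)) ^ q with hNdef
  set K : ℝ := ((π / (q - 5)) * N / dRho Δv f) ^ (1 / (q - 3)) with hKdef
  have haux : 0 < (π / (q - 5)) * N / dRho Δv f := by positivity
  have hK : 0 < K := Real.rpow_pos_of_pos haux _
  have hKpow : K ^ (q-3) = (π / (q - 5)) * N / dRho Δv f := by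
    rw [hKdef, ← Real.rpow_mul haux.le, one_div_mul_cancel (ne_of_gt hq3), Real.rpow_one]
  have hΔv3 : (0:ℝ) ≤ Δv ^ 3 := by positivity
  have hw1 : ∀ j, (1:ℝ) ≤ 1 + enorm3 (gridV Δv j) := fun j => by
    linarith [enorm3_nonneg (gridV Δv j)]
  have hwpos : ∀ j, (0:ℝ) < 1 + enorm3 (gridV Δv j) := fun j => lt_of_lt_of_le one_pos (hw1 j)
  have hfN : ∀ j, f j * (1 + enorm3 (gridV Δv j)) ^ q ≤ N := fun j => le_ciSup hBdd j
  have hfle : ∀ j, f j ≤ N / (1 + enorm3 (gridV Δv j)) ^ q := fun j =>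
    (le_div_iff₀ (Real.rpow_pos_of_pos (hwpos j) q)).2 (hfN j)
  -- summability of the density
  have hsum0 : Summable (fun j : Idx3 => f j * Δv ^ 3) := by
    by_contra hcon
    rw [show dRho Δv f = ∑' j : Idx3, f j * Δv ^ 3 from rfl,
      tsum_eq_zero_of_not_summable hcon] at hρ
    exact lt_irrefl 0 hρ
  have hsumρ : ∀ t : Finset Idx3, ∑ j ∈ t, f j * Δv ^ 3 ≤ dRho Δv f := fun t =>
    Summable.sum_le_tsum t (fun j _ => mul_nonneg (hf j) hΔv3) hsum0
  -- partial sums of the second moment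
  have hm2partial : ∀ t : Finset Idx3,
      ∑ j ∈ t, f j * enorm3 (gridV Δv j) ^ 2 * Δv ^ 3 ≤ c₃ * (K^2 * dRho Δv f) := by
    intro t
    have hsplit : ∀ j, f j * enorm3 (gridV Δv j) ^ 2 * Δv ^ 3 ≤
        K^2 * (f j * Δv ^ 3) + N * (if K < enorm3 (gridV Δv j)
          then (1 + enorm3 (gridV Δv j)) ^ (2-q) * Δv ^ 3 else 0) := by
      intro j
      set e := enorm3 (gridV Δv j) with hedef
      have he0 : 0 ≤ e := enorm3_nonneg _
      by_cases hj : K < e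
      · rw [if_pos hj]
        have hK2 : 0 ≤ K^2 * (f j * Δv ^ 3) := by
          have := mul_nonneg (hf j) hΔv3; positivity
        have hwq : (1 + e) ^ (2-q) = (1+e)^(2:ℕ) / (1+e)^q := by
          rw [← Real.rpow_natCast (1+e) 2, ← Real.rpow_sub (hwpos j)]
          norm_num
          rw [hedef]
        have h1 : f j * e ^ 2 ≤ N * (1 + e) ^ (2-q) := by
          rw [hwq]
          have he2 : e^2 ≤ (1+e)^(2:ℕ) := by nlinarith
          calc f j * e^2 ≤ (N / (1+e)^q) * (1+e)^(2:ℕ) := by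
                apply mul_le_mul (hfle j) he2 (by positivity) ?_
                positivity
            _ = N * ((1+e)^(2:ℕ) / (1+e)^q) := by ring
        have := mul_le_mul_of_nonneg_right h1 hΔv3
        nlinarith [this, hK2]
      · rw [if_neg hj]
        push_neg at hj
        have h1 : f j * e^2 * Δv^3 ≤ K^2 * (f j * Δv^3) := by
          have he2 : e^2 ≤ K^2 := by nlinarith
          have := mul_nonneg (hf j) hΔv3
          nlinarith
        simpa using h1
    have htail := tail_sum hq hΔv hΔvK t
    calc ∑ j ∈ t, f j * enorm3 (gridV Δv j) ^ 2 * Δv ^ 3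
        ≤ ∑ j ∈ t, (K^2 * (f j * Δv ^ 3) + N * (if K < enorm3 (gridV Δv j)
            then (1 + enorm3 (gridV Δv j)) ^ (2-q) * Δv ^ 3 else 0)) :=
          Finset.sum_le_sum fun j _ => hsplit j
      _ = K^2 * (∑ j ∈ t, f j * Δv ^ 3) + N * ∑ j ∈ t, (if K < enorm3 (gridV Δv j)
            then (1 + enorm3 (gridV Δv j)) ^ (2-q) * Δv ^ 3 else 0) := by
          rw [Finset.sum_add_distrib, Finset.mul_sum, Finset.mul_sum]
      _ ≤ K^2 * dRho Δv f + N * (C₁ * K ^ (5-q)) := by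
          apply add_le_add
          · exact mul_le_mul_of_nonneg_left (hsumρ t) (by positivity)
          · apply mul_le_mul_of_nonneg_left ?_ (le_of_lt hN)
            rw [hC₁def]
            exact htail
      _ = c₃ * (K^2 * dRho Δv f) := by
          have h5q : K ^ (5-q) = K^(2:ℕ) * (K ^ (q-3))⁻¹ := by
            rw [← Real.rpow_natCast K 2, ← Real.rpow_neg hK.le, ← Real.rpow_add hK]
            norm_num
            congr 1
            ring
          rw [h5q, hKpow, hc₃def]
          have hρ0 : dRho Δv f ≠ 0 := ne_of_gt hρ
          have hN0 : N ≠ 0 := ne_of_gt hN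
          field_simp
  have hm2nonneg : ∀ j, 0 ≤ f j * enorm3 (gridV Δv j) ^ 2 * Δv ^ 3 := fun j =>
    mul_nonneg (mul_nonneg (hf j) (sq_nonneg _)) hΔv3
  have hm2nonneg' : (0 : Idx3 → ℝ) ≤ fun j : Idx3 => f j * enorm3 (gridV Δv j) ^ 2 * Δv ^ 3 :=
    fun j => hm2nonneg j
  have hsum2 : Summable (fun j : Idx3 => f j * enorm3 (gridV Δv j) ^ 2 * Δv ^ 3) :=
    summable_of_sum_le hm2nonneg' hm2partial
  set m₂ : ℝ := ∑' j : Idx3, f j * enorm3 (gridV Δv j) ^ 2 * Δv ^ 3 with hm₂def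
  have hm₂nn : 0 ≤ m₂ := tsum_nonneg hm2nonneg
  have hm2 : m₂ ≤ c₃ * (K^2 * dRho Δv f) := Summable.tsum_le_of_sum_le hsum2 hm2partial
  -- coordinate summabilities
  have hcoordsq : ∀ (j : Idx3) (a : Fin 3), (gridV Δv j a)^2 ≤ enorm3 (gridV Δv j)^2 := by
    intro j a
    have h1 := coord_le_enorm3 (gridV Δv j) a
    nlinarith [abs_nonneg (gridV Δv j a), sq_abs (gridV Δv j a)]
  have hsum_abs : ∀ a : Fin 3, Summable (fun j : Idx3 => f j * |gridV Δv j a| * Δv ^ 3) := by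
    intro a
    apply Summable.of_nonneg_of_le
      (fun j => mul_nonneg (mul_nonneg (hf j) (abs_nonneg _)) hΔv3)
      (fun j => ?_) (hsum0.add hsum2)
    have h1 : |gridV Δv j a| ≤ 1 + enorm3 (gridV Δv j)^2 := by
      have h2 := coord_le_enorm3 (gridV Δv j) a
      nlinarith [enorm3_nonneg (gridV Δv j)]
    have h3 := mul_nonneg (hf j) hΔv3
    nlinarith [mul_le_mul_of_nonneg_left h1 (hf j), hΔv3, hf j]
  have hsumva : ∀ a : Fin 3, Summable (fun j : Idx3 => f j * gridV Δv j a * Δv ^ 3) := by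
    intro a
    apply Summable.of_abs
    apply (hsum_abs a).congr
    intro j
    rw [abs_mul, abs_mul, abs_of_nonneg (hf j), abs_of_nonneg hΔv3]
  have hsumv2 : ∀ a : Fin 3, Summable (fun j : Idx3 => f j * (gridV Δv j a)^2 * Δv ^ 3) := by
    intro a
    apply Summable.of_nonneg_of_le
      (fun j => mul_nonneg (mul_nonneg (hf j) (sq_nonneg _)) hΔv3)
      (fun j => ?_) hsum2
    have := hcoordsq j a
    have h3 := mul_nonneg (hf j) hΔv3
    nlinarith [hf j, hΔv3]
  -- Cauchy-Schwarz per coordinate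
  have hCS : ∀ a : Fin 3,
      (∑' j : Idx3, f j * |gridV Δv j a| * Δv ^ 3)^2
        ≤ dRho Δv f * ∑' j : Idx3, f j * (gridV Δv j a)^2 * Δv ^ 3 := by
    intro a
    set m1 : ℝ := ∑' j : Idx3, f j * |gridV Δv j a| * Δv ^ 3 with hm1def
    set m2a : ℝ := ∑' j : Idx3, f j * (gridV Δv j a)^2 * Δv ^ 3 with hm2adef
    have hm1nn : 0 ≤ m1 := tsum_nonneg fun j =>
      mul_nonneg (mul_nonneg (hf j) (abs_nonneg _)) hΔv3
    have hm2ann : 0 ≤ m2a := tsum_nonneg fun j =>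
      mul_nonneg (mul_nonneg (hf j) (sq_nonneg _)) hΔv3
    have key : ∀ ε : ℝ, 0 < ε → 2*ε*m1 ≤ ε^2 * dRho Δv f + m2a := by
      intro ε hε
      have h1 : ∀ j : Idx3, 2*ε*(f j * |gridV Δv j a| * Δv ^ 3)
          ≤ ε^2*(f j * Δv^3) + f j * (gridV Δv j a)^2 * Δv^3 := by
        intro j
        have h2 : 2*ε*|gridV Δv j a| ≤ ε^2 + (gridV Δv j a)^2 := by
          nlinarith [sq_nonneg (ε - |gridV Δv j a|), sq_abs (gridV Δv j a)]
        have h3 := mul_le_mul_of_nonneg_left h2 (mul_nonneg (hf j) hΔv3)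
        nlinarith [h3]
      have hL : Summable (fun j : Idx3 => 2*ε*(f j * |gridV Δv j a| * Δv ^ 3)) :=
        (hsum_abs a).mul_left _
      have hR : Summable (fun j : Idx3 =>
          ε^2*(f j * Δv^3) + f j * (gridV Δv j a)^2 * Δv^3) :=
        (hsum0.mul_left _).add (hsumv2 a)
      have h4 := Summable.tsum_le_tsum h1 hL hR
      rw [Summable.tsum_add (hsum0.mul_left _) (hsumv2 a), tsum_mul_left, tsum_mul_left] at h4
      exact h4
    rcases eq_or_lt_of_le hm1nn with h0 | hpos
    · rw [← h0]
      simpa using mul_nonneg hρ.le hm2ann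
    · have h2 := key (m1 / dRho Δv f) (by positivity)
      have hρ0 : dRho Δv f ≠ 0 := ne_of_gt hρ
      have h3 : (m1 / dRho Δv f)^2 * dRho Δv f = m1^2 / dRho Δv f := by
        field_simp
      have h4 : 2*(m1 / dRho Δv f)*m1 = 2*m1^2/dRho Δv f := by
        field_simp
      rw [h3, h4] at h2
      have h5 : m1^2 / dRho Δv f ≤ m2a := by
        have : 2*m1^2/dRho Δv f - m1^2/dRho Δv f = m1^2/dRho Δv f := by ring
        linarith [h2, this.symm.le]
      calc m1^2 = (m1^2 / dRho Δv f) * dRho Δv f := by field_simp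
        _ ≤ m2a * dRho Δv f := mul_le_mul_of_nonneg_right h5 hρ.le
        _ = dRho Δv f * m2a := by ring
  -- decomposition of the second moment
  have hm2sum : ∑ a : Fin 3, (∑' j : Idx3, f j * (gridV Δv j a)^2 * Δv ^ 3) = m₂ := by
    rw [← Summable.tsum_finsetSum (fun a _ => hsumv2 a), hm₂def]
    apply tsum_congr
    intro j
    rw [sq_enorm3]
    rw [← Finset.sum_mul, ← Finset.mul_sum]
  -- bulk velocity bound
  have hU : enorm3 (dU Δv f) ^ 2 ≤ m₂ / dRho Δv f := by
    rw [sq_enorm3]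
    have h1 : ∀ a : Fin 3, (dU Δv f a)^2 ≤
        (dRho Δv f)⁻¹^2 * (dRho Δv f * ∑' j : Idx3, f j * (gridV Δv j a)^2 * Δv ^ 3) := by
      intro a
      have hdef : dU Δv f a = (dRho Δv f)⁻¹ * ∑' j : Idx3, f j * gridV Δv j a * Δv ^ 3 := rfl
      have habs : |∑' j : Idx3, f j * gridV Δv j a * Δv ^ 3|
          ≤ ∑' j : Idx3, f j * |gridV Δv j a| * Δv ^ 3 := by
        rw [← Real.norm_eq_abs]
        have hnorm : Summable (fun j : Idx3 => ‖f j * gridV Δv j a * Δv ^ 3‖) := by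
          apply (hsum_abs a).congr
          intro j
          rw [Real.norm_eq_abs, abs_mul, abs_mul, abs_of_nonneg (hf j), abs_of_nonneg hΔv3]
        refine (norm_tsum_le_tsum_norm hnorm).trans_eq ?_
        apply tsum_congr
        intro j
        rw [Real.norm_eq_abs, abs_mul, abs_mul, abs_of_nonneg (hf j), abs_of_nonneg hΔv3]
      calc (dU Δv f a)^2
          = (dRho Δv f)⁻¹^2 * (∑' j : Idx3, f j * gridV Δv j a * Δv ^ 3)^2 := by
            rw [hdef, mul_pow]
        _ ≤ (dRho Δv f)⁻¹^2 * (∑' j : Idx3, f j * |gridV Δv j a| * Δv ^ 3)^2 := by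
            apply mul_le_mul_of_nonneg_left ?_ (sq_nonneg _)
            rw [← sq_abs (∑' j : Idx3, f j * gridV Δv j a * Δv ^ 3)]
            apply pow_le_pow_left₀ (abs_nonneg _) habs
        _ ≤ (dRho Δv f)⁻¹^2 * (dRho Δv f * ∑' j : Idx3, f j * (gridV Δv j a)^2 * Δv ^ 3) :=
            mul_le_mul_of_nonneg_left (hCS a) (sq_nonneg _)
    calc ∑ a : Fin 3, (dU Δv f a)^2
        ≤ ∑ a : Fin 3, (dRho Δv f)⁻¹^2 *
            (dRho Δv f * ∑' j : Idx3, f j * (gridV Δv j a)^2 * Δv ^ 3) :=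
          Finset.sum_le_sum fun a _ => h1 a
      _ = (dRho Δv f)⁻¹^2 * dRho Δv f * m₂ := by
          rw [← Finset.mul_sum]
          rw [← Finset.mul_sum, hm2sum]
          ring
      _ = m₂ / dRho Δv f := by
          have hρ0 : dRho Δv f ≠ 0 := ne_of_gt hρ
          field_simp
  -- temperature bound
  have hUnn : 0 ≤ enorm3 (dU Δv f)^2 := sq_nonneg _
  have hTsum : ∑' j : Idx3, f j * enorm3 (fun a => gridV Δv j a - dU Δv f a) ^ 2 * Δv ^ 3
      ≤ 2*m₂ + (2*enorm3 (dU Δv f)^2) * dRho Δv f := by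
    have hpt : ∀ j : Idx3, f j * enorm3 (fun a => gridV Δv j a - dU Δv f a) ^ 2 * Δv ^ 3
        ≤ 2*(f j * enorm3 (gridV Δv j)^2 * Δv^3)
          + (2*enorm3 (dU Δv f)^2)*(f j * Δv^3) := by
      intro j
      have h2 : enorm3 (fun a => gridV Δv j a - dU Δv f a)^2
          ≤ 2*enorm3 (gridV Δv j)^2 + 2*enorm3 (dU Δv f)^2 := by
        rw [sq_enorm3, sq_enorm3, sq_enorm3]
        calc ∑ a : Fin 3, (gridV Δv j a - dU Δv f a)^2
            ≤ ∑ a : Fin 3, (2*(gridV Δv j a)^2 + 2*(dU Δv f a)^2) :=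
              Finset.sum_le_sum fun a _ => by nlinarith [sq_nonneg (gridV Δv j a + dU Δv f a)]
          _ = 2*(∑ a : Fin 3, (gridV Δv j a)^2) + 2*(∑ a : Fin 3, (dU Δv f a)^2) := by
              rw [Finset.sum_add_distrib, ← Finset.mul_sum, ← Finset.mul_sum]
      have h3 := mul_nonneg (hf j) hΔv3
      nlinarith [mul_le_mul_of_nonneg_left h2 (hf j), hΔv3, hf j,
        mul_le_mul_of_nonneg_right (mul_le_mul_of_nonneg_left h2 (hf j)) hΔv3]
    have hR : Summable (fun j : Idx3 => 2*(f j * enorm3 (gridV Δv j)^2 * Δv^3)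
        + (2*enorm3 (dU Δv f)^2)*(f j * Δv^3)) :=
      (hsum2.mul_left _).add (hsum0.mul_left _)
    have hL : Summable (fun j : Idx3 =>
        f j * enorm3 (fun a => gridV Δv j a - dU Δv f a) ^ 2 * Δv ^ 3) := by
      apply Summable.of_nonneg_of_le
        (fun j => mul_nonneg (mul_nonneg (hf j) (sq_nonneg _)) hΔv3) hpt hR
    have h4 := Summable.tsum_le_tsum hpt hL hR
    rwa [Summable.tsum_add (hsum2.mul_left _) (hsum0.mul_left _), tsum_mul_left, tsum_mul_left] at h4
  have hT : dT Δv f ≤ (4/3) * (m₂ / dRho Δv f) := by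
    have hdT : dT Δv f = (3 * dRho Δv f)⁻¹ *
        ∑' j : Idx3, f j * enorm3 (fun a => gridV Δv j a - dU Δv f a) ^ 2 * Δv ^ 3 := rfl
    rw [hdT]
    have h3ρ : (0:ℝ) < 3 * dRho Δv f := by linarith
    have hU2 : (2*enorm3 (dU Δv f)^2) * dRho Δv f ≤ 2*(m₂/dRho Δv f) * dRho Δv f := by
      apply mul_le_mul_of_nonneg_right ?_ hρ.le
      linarith [hU]
    calc (3 * dRho Δv f)⁻¹ * ∑' j : Idx3,
          f j * enorm3 (fun a => gridV Δv j a - dU Δv f a) ^ 2 * Δv ^ 3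
        ≤ (3 * dRho Δv f)⁻¹ * (2*m₂ + 2*(m₂/dRho Δv f) * dRho Δv f) := by
          apply mul_le_mul_of_nonneg_left ?_ (by positivity)
          linarith [hTsum, hU2]
      _ = (4/3) * (m₂ / dRho Δv f) := by
          have hρ0 : dRho Δv f ≠ 0 := ne_of_gt hρ
          field_simp
          ring
  -- final assembly
  have hTU : dT Δv f + enorm3 (dU Δv f)^2 ≤ (7/3) * (m₂ / dRho Δv f) := by
    have := hU
    linarith [hT]
  have hm₂ρ : m₂ / dRho Δv f ≤ c₃ * K^2 := by
    rw [div_le_iff₀ hρ]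
    linarith [hm2]
  have hfinal1 : dT Δv f + enorm3 (dU Δv f)^2 ≤ ((7/3) * c₃) * K^2 := by
    have h1 : (7/3) * (m₂ / dRho Δv f) ≤ (7/3) * (c₃ * K^2) :=
      mul_le_mul_of_nonneg_left hm₂ρ (by norm_num)
    calc dT Δv f + enorm3 (dU Δv f)^2 ≤ (7/3) * (m₂ / dRho Δv f) := hTU
      _ ≤ (7/3) * (c₃ * K^2) := h1
      _ = ((7/3) * c₃) * K^2 := by ring
  have hdTnn : 0 ≤ dT Δv f := by
    apply mul_nonneg (by positivity)
    exact tsum_nonneg fun j => mul_nonneg (mul_nonneg (hf j) (sq_nonneg _)) hΔv3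
  have hexp : (0:ℝ) ≤ (q-3)/2 := by linarith
  have hbase : 0 ≤ dT Δv f + enorm3 (dU Δv f)^2 := by linarith [hUnn]
  have hKsq : ((K^2 : ℝ)) ^ ((q-3)/2) = K ^ (q-3) := by
    rw [← Real.rpow_natCast K 2, ← Real.rpow_mul hK.le]
    congr 1
    ring
  calc dRho Δv f * (dT Δv f + enorm3 (dU Δv f) ^ 2) ^ ((q - 3) / 2)
      ≤ dRho Δv f * (((7/3) * c₃) * K^2) ^ ((q-3)/2) := by
        apply mul_le_mul_of_nonneg_left ?_ hρ.le
        exact Real.rpow_le_rpow hbase hfinal1 hexp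
    _ = dRho Δv f * (((7/3) * c₃) ^ ((q-3)/2) * (K^2) ^ ((q-3)/2)) := by
        rw [Real.mul_rpow (by positivity) (by positivity)]
    _ = ((7/3) * c₃) ^ ((q-3)/2) * (dRho Δv f * K ^ (q-3)) := by
        rw [hKsq]; ring
    _ = ((7/3) * c₃) ^ ((q-3)/2) * ((π/(q-5)) * N) := by
        rw [hKpow]
        have hρ0 : dRho Δv f ≠ 0 := ne_of_gt hρ
        field_simp
    _ = π/(q-5) * ((7/3) * c₃) ^ ((q-3)/2) * N := by ring

end
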